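/- Key Lemma 2 (unilateral version): If (α_n, β_n)_{n≥0} is a Bailey pair relative to a, i.e., β_n = Σ_{j=0}^{n} α_j / ((q;q)_{n-j} (aq;q)_{n+j}) for all n ≥ 0, then (α'_n, β'_n) is a Bailey pair relative to a/q, where α'_0 = α_0, α'_n = (1-a)( q^n α_n/(1 - a q^{2n}) - q^{n-1} α_{n-1}/(1 - a q^{2n-2}) ) for n ≥ 1, and β'_n = q^n β_n. That is, β'_n = Σ_{j=0}^{n} α'_j / ((q;q)_{n-j} (a;q)_{n+j}) for all n ≥ 0. -/

import Mathlib

set_option maxHeartbeats 1600000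


/-- The q-Pochhammer symbol `(x;q)_k = ∏_{i=0}^{k-1} (1 - x q^i)`. -/
noncomputable def qp (q x : ℂ) (k : ℕ) : ℂ := ∏ i ∈ Finset.range k, (1 - x * q ^ i)

lemma qp_succ (q x : ℂ) (k : ℕ) : qp q x (k + 1) = qp q x k * (1 - x * q ^ k) :=
  Finset.prod_range_succ _ _

lemma qp_shift (q a : ℂ) (k : ℕ) : qp q a (k + 1) = (1 - a) * qp q (a * q) k := by
  unfold qp
  rw [Finset.prod_range_succ', pow_zero, mul_one, mul_comm]
  congr 1
  apply Finset.prod_congr rfl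
  intro i _
  rw [pow_succ']
  ring_nf

lemma core_abs (A B u v w t p y : ℂ) (hA : A ≠ 0) (hB : B ≠ 0) (hu : u ≠ 0)
    (hv : v ≠ 0) (hw : w ≠ 0) (ht : t ≠ 0) (hrel : t - u = p * w) :
    v * (y / w) / (A * u * (v * B)) - v * (y / w) / (A * (v * (B * t)))
      = p * (y / (A * u * (B * t))) := by
  have hD1 : A * u * (v * B) ≠ 0 :=
    mul_ne_zero (mul_ne_zero hA hu) (mul_ne_zero hv hB)
  have hD2 : A * (v * (B * t)) ≠ 0 :=
    mul_ne_zero hA (mul_ne_zero hv (mul_ne_zero hB ht))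
  have hE : A * u * (B * t) ≠ 0 :=
    mul_ne_zero (mul_ne_zero hA hu) (mul_ne_zero hB ht)
  rw [div_sub_div _ _ hD1 hD2, mul_div_assoc' p y, div_eq_div_iff (mul_ne_zero hD1 hD2) hE]
  field_simp
  linear_combination y * hrel

/-- Key Lemma 2 (unilateral): if `(α, β)` is a Bailey pair relative to `a`, then
`(α', β')` with `α'_0 = α_0`, `α'_n = (1-a)(q^n α_n/(1-aq^{2n}) - q^{n-1} α_{n-1}/(1-aq^{2n-2}))`
and `β'_n = q^n β_n` is a Bailey pair relative to `a/q`. -/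
theorem key_lemma_two (q a : ℂ) (α β α' β' : ℕ → ℂ)
    (hqq : ∀ k, qp q q k ≠ 0) (ha : ∀ k, qp q a k ≠ 0) (haq : ∀ k, qp q (a * q) k ≠ 0)
    (hden : ∀ n : ℕ, 1 - a * q ^ (2 * n) ≠ 0)
    (hB : ∀ n, β n = ∑ j ∈ Finset.range (n + 1),
        α j / (qp q q (n - j) * qp q (a * q) (n + j)))
    (hα'0 : α' 0 = α 0)
    (hα' : ∀ n : ℕ, α' (n + 1) = (1 - a) *
        (q ^ (n + 1) * α (n + 1) / (1 - a * q ^ (2 * (n + 1)))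
          - q ^ n * α n / (1 - a * q ^ (2 * n))))
    (hβ' : ∀ n, β' n = q ^ n * β n) :
    ∀ n, β' n = ∑ j ∈ Finset.range (n + 1),
        α' j / (qp q q (n - j) * qp q a (n + j)) := by
  intro n
  have h1a : (1 : ℂ) - a ≠ 0 := by simpa using hden 0
  have key : ∀ k, k ≤ n →
      (∑ j ∈ Finset.range (k + 1), α' j / (qp q q (n - j) * qp q a (n + j)))
      = (∑ j ∈ Finset.range k, q ^ n * (α j / (qp q q (n - j) * qp q (a * q) (n + j))))
        + (1 - a) * (q ^ k * α k / (1 - a * q ^ (2 * k)))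
            / (qp q q (n - k) * qp q a (n + k)) := by
    intro k hk
    induction k with
    | zero =>
        simp only [Finset.sum_range_one, Finset.range_zero, Finset.sum_empty, zero_add,
          Nat.sub_zero, Nat.add_zero, pow_zero, one_mul, Nat.mul_zero, hα'0]
        have : (1 - a) * (α 0 / (1 - a * 1)) = α 0 := by
          field_simp
        rw [this]
    | succ k ih =>
        have hk' : k ≤ n := by omega
        rw [Finset.sum_range_succ, ih hk', Finset.sum_range_succ, hα' k]
        obtain ⟨m, hm⟩ : ∃ m, n = k + m + 1 := ⟨n - k - 1, by omega⟩
        subst hm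
        have e1 : k + m + 1 - k = m + 1 := by omega
        have e2 : k + m + 1 - (k + 1) = m := by omega
        have e3 : k + m + 1 + k = 2 * k + m + 1 := by omega
        have e4 : k + m + 1 + (k + 1) = 2 * k + m + 1 + 1 := by omega
        rw [e1, e2, e3, e4]
        rw [qp_shift q a (2 * k + m + 1), qp_succ q (a * q) (2 * k + m),
          qp_shift q a (2 * k + m), qp_succ q q m]
        have hA : qp q q m ≠ 0 := hqq m
        have hB' : qp q (a * q) (2 * k + m) ≠ 0 := haq _
        have h1 : (1 : ℂ) - q * q ^ m ≠ 0 := by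
          have := hqq (m + 1)
          rw [qp_succ] at this
          exact fun h => this (by rw [h, mul_zero])
        have h4 : (1 : ℂ) - a * q * q ^ (2 * k + m) ≠ 0 := by
          have := haq (2 * k + m + 1)
          rw [qp_succ] at this
          exact fun h => this (by rw [h, mul_zero])
        have h3 : (1 : ℂ) - a * q ^ (2 * k) ≠ 0 := hden k
        have h5 : (1 : ℂ) - a * q ^ (2 * (k + 1)) ≠ 0 := hden (k + 1)
        have hrel : (1 - a * q * q ^ (2 * k + m)) - (1 - q * q ^ m)
            = (q * q ^ m) * (1 - a * q ^ (2 * k)) := by ring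
        have core := core_abs (qp q q m) (qp q (a * q) (2 * k + m)) (1 - q * q ^ m)
          (1 - a) (1 - a * q ^ (2 * k)) (1 - a * q * q ^ (2 * k + m)) (q * q ^ m)
          (q ^ k * α k) hA hB' h1 h1a h3 h4 hrel
        linear_combination core
  have hbound := key n le_rfl
  rw [Nat.sub_self] at hbound
  have hq0 : qp q q 0 = 1 := by simp [qp]
  have hrel : (1 - a) * qp q (a * q) (n + n) = qp q a (n + n) * (1 - a * q ^ (2 * n)) := by
    rw [← qp_shift, qp_succ, two_mul]
  rw [hβ', hB, Finset.mul_sum, Finset.sum_range_succ]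
  rw [hbound, hq0]
  congr 1
  rw [Nat.sub_self, hq0]
  have hA : qp q a (n + n) ≠ 0 := ha _
  have hB2 : qp q (a * q) (n + n) ≠ 0 := haq _
  have h3 : (1 : ℂ) - a * q ^ (2 * n) ≠ 0 := hden n
  field_simp
  linear_combination (-(q ^ n * α n)) * hrel
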